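/- Let p, q > 1 be coprime integers and let n be a positive integer. Then the number of finitely supported functions a : {q^k p^ℓ : k, ℓ ∈ ℕ} → {0, 1, …, q−1} with Σ_{k,ℓ} a(q^k p^ℓ)·q^k p^ℓ = n is equal to the number of finitely supported sequences (n_ℓ)_{ℓ ≥ 0} of non-negative integers with Σ_{ℓ ≥ 0} n_ℓ p^ℓ = n (i.e., double-base representations with bases q and p and digit set {0, 1, …, q−1} are in bijection with partitions of n into powers of p). -/

import Mathlib

open Set

noncomputable section

namespace DBRAux

open Finset

variable {p q : ℕ}

lemma exp_unique (hp : 1 < p) (hq : 1 < q) (hpq : Nat.Coprime p q)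
    {k l k' l' : ℕ} (h : q ^ k * p ^ l = q ^ k' * p ^ l') : k = k' ∧ l = l' := by
  have key : ∀ {a b a' b' : ℕ}, q ^ a * p ^ b = q ^ a' * p ^ b' → a ≤ a' := by
    intro a b a' b' hab
    by_contra hlt
    push_neg at hlt
    have hd : q ^ a' * q ^ (a - a') = q ^ a := by
      rw [← pow_add]; congr 1; omega
    have hq0 : 0 < q ^ a' := pow_pos (by omega) _
    have hmul : q ^ (a - a') * p ^ b = p ^ b' := by
      have h2 := hab
      rw [← hd, mul_assoc] at h2
      exact Nat.eq_of_mul_eq_mul_left hq0 h2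
    have hdvd : q ^ (a - a') ∣ p ^ b' := ⟨p ^ b, hmul.symm⟩
    have hcop : Nat.Coprime (q ^ (a - a')) (p ^ b') := Nat.Coprime.pow _ _ hpq.symm
    have h1 : q ^ (a - a') = 1 := hcop.eq_one_of_dvd hdvd
    have : 1 < q ^ (a - a') := Nat.one_lt_pow (by omega) hq
    omega
  have hk : k = k' := le_antisymm (key h) (key h.symm)
  subst hk
  have hp2 : p ^ l = p ^ l' := by
    have hq0 : 0 < q ^ k := pow_pos (by omega) _
    exact Nat.eq_of_mul_eq_mul_left hq0 h
  exact ⟨rfl, Nat.pow_right_injective hp hp2⟩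

open scoped Classical in
noncomputable def eK (p q h : ℕ) : ℕ :=
  if hh : ∃ k l, h = q ^ k * p ^ l then hh.choose else 0

open scoped Classical in
noncomputable def eL (p q h : ℕ) : ℕ :=
  if hh : ∃ k l, h = q ^ k * p ^ l then hh.choose_spec.choose else 0

lemma eKL_spec (h : ℕ) (hh : ∃ k l, h = q ^ k * p ^ l) :
    h = q ^ eK p q h * p ^ eL p q h := by
  classical
  rw [eK, eL, dif_pos hh, dif_pos hh]
  exact hh.choose_spec.choose_spec

lemma eK_eq (hp : 1 < p) (hq : 1 < q) (hpq : Nat.Coprime p q) (k l : ℕ) :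
    eK p q (q ^ k * p ^ l) = k ∧ eL p q (q ^ k * p ^ l) = l := by
  have hh : ∃ k' l', q ^ k * p ^ l = q ^ k' * p ^ l' := ⟨k, l, rfl⟩
  have hs := eKL_spec _ hh
  have h2 := exp_unique hp hq hpq hs.symm
  exact ⟨h2.1, h2.2⟩

noncomputable def phi (p q : ℕ) (a : ℕ →₀ ℕ) : ℕ →₀ ℕ :=
  a.sum fun h c => Finsupp.single (eL p q h) (c * q ^ eK p q h)

noncomputable def dgt (p q l c : ℕ) : ℕ →₀ ℕ :=
  ∑ k ∈ Finset.range (c + 1), Finsupp.single (q ^ k * p ^ l) (c / q ^ k % q)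

noncomputable def psi (p q : ℕ) (f : ℕ →₀ ℕ) : ℕ →₀ ℕ :=
  f.sum fun l c => dgt p q l c

lemma digit_expand (m c : ℕ) :
    ∑ k ∈ Finset.range m, c / q ^ k % q * q ^ k = c % q ^ m := by
  induction m with
  | zero => simp [Nat.mod_one]
  | succ m ih =>
    rw [Finset.sum_range_succ, ih, pow_succ, Nat.mod_mul]
    ring

lemma digit_expand' (hq : 1 < q) (c : ℕ) :
    ∑ k ∈ Finset.range (c + 1), c / q ^ k % q * q ^ k = c := by
  rw [digit_expand]
  exact Nat.mod_eq_of_lt (lt_trans (Nat.lt_succ_self c) (Nat.lt_pow_self hq))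

lemma val_split (m : ℕ) (b : ℕ → ℕ) :
    ∑ k ∈ Finset.range (m + 1), b k * q ^ k
      = b 0 + q * ∑ k ∈ Finset.range m, b (k + 1) * q ^ k := by
  rw [Finset.sum_range_succ', pow_zero, mul_one, add_comm, Finset.mul_sum]
  congr 1
  apply Finset.sum_congr rfl
  intro k _
  ring

lemma val_digit (hq : 1 < q) :
    ∀ j m (b : ℕ → ℕ), (∀ k, b k < q) → (∀ k, m ≤ k → b k = 0) →
      (∑ k ∈ Finset.range m, b k * q ^ k) / q ^ j % q = b j := by
  have hq0 : 0 < q := by omega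
  intro j
  induction j with
  | zero =>
    rintro (_ | m) b hb hz
    · simp [hz 0 (Nat.zero_le 0)]
    · rw [val_split, pow_zero, Nat.div_one, Nat.add_mul_mod_self_left]
      exact Nat.mod_eq_of_lt (hb 0)
  | succ j ih =>
    rintro (_ | m) b hb hz
    · simp only [Finset.range_zero, Finset.sum_empty, Nat.zero_div, Nat.zero_mod]
      exact (hz _ (Nat.zero_le _)).symm
    · rw [val_split, pow_succ', ← Nat.div_div_eq_div_mul,
        Nat.add_mul_div_left _ _ hq0, Nat.div_eq_of_lt (hb 0), zero_add]
      exact ih m (fun k => b (k + 1)) (fun k => hb _) (fun k hk => hz _ (by omega))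

lemma dgt_apply_form (hp : 1 < p) (hq : 1 < q) (hpq : Nat.Coprime p q)
    (l' l c k : ℕ) :
    dgt p q l' c (q ^ k * p ^ l) = if l' = l then c / q ^ k % q else 0 := by
  classical
  rw [dgt, Finset.sum_apply']
  by_cases hl : l' = l
  · subst hl
    rw [if_pos rfl]
    have hcond : ∀ k', ((q : ℕ) ^ k' * p ^ l' = q ^ k * p ^ l') ↔ k' = k := by
      intro k'
      constructor
      · intro h; exact (exp_unique hp hq hpq h).1
      · rintro rfl; rfl
    have hstep : ∀ k' ∈ Finset.range (c + 1),
        (Finsupp.single (q ^ k' * p ^ l') (c / q ^ k' % q) : ℕ →₀ ℕ) (q ^ k * p ^ l')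
          = if k' = k then c / q ^ k' % q else 0 := by
      intro k' _
      rw [Finsupp.single_apply, if_congr (hcond k') rfl rfl]
    rw [Finset.sum_congr rfl hstep, Finset.sum_ite_eq' (Finset.range (c + 1)) k]
    by_cases hk : k ∈ Finset.range (c + 1)
    · rw [if_pos hk]
    · rw [if_neg hk]
      have hkc : c < q ^ k := by
        have h1 : c + 1 ≤ k := by simpa [Finset.mem_range] using hk
        calc c < q ^ (c + 1) :=
              lt_trans (Nat.lt_succ_self c) (Nat.lt_pow_self hq)
          _ ≤ q ^ k := Nat.pow_le_pow_right (by omega) h1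
      rw [Nat.div_eq_of_lt hkc, Nat.zero_mod]
  · rw [if_neg hl]
    apply Finset.sum_eq_zero
    intro k' _
    rw [Finsupp.single_apply, if_neg]
    intro he
    exact hl (exp_unique hp hq hpq he).2

lemma psi_apply_form (hp : 1 < p) (hq : 1 < q) (hpq : Nat.Coprime p q)
    (f : ℕ →₀ ℕ) (k l : ℕ) :
    psi p q f (q ^ k * p ^ l) = f l / q ^ k % q := by
  classical
  rw [psi, Finsupp.sum_apply,
    Finsupp.sum_congr (g2 := fun l' c => if l' = l then c / q ^ k % q else 0)
      (fun l' _ => dgt_apply_form hp hq hpq l' l (f l') k),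
    Finsupp.sum_ite_eq']
  by_cases hl : l ∈ f.support
  · rw [if_pos hl]
  · rw [if_neg hl, Finsupp.notMem_support_iff.mp hl]
    simp

lemma psi_apply_nform (f : ℕ →₀ ℕ) (h : ℕ) (hh : ∀ k l, h ≠ q ^ k * p ^ l) :
    psi p q f h = 0 := by
  classical
  rw [psi, Finsupp.sum_apply, Finsupp.sum]
  apply Finset.sum_eq_zero
  intro l _
  rw [dgt, Finset.sum_apply']
  apply Finset.sum_eq_zero
  intro k _
  rw [Finsupp.single_apply, if_neg]
  intro he
  exact hh k l he.symm

lemma psi_sum (hp : 1 < p) (hq : 1 < q) (hpq : Nat.Coprime p q) (f : ℕ →₀ ℕ) :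
    ((psi p q f).sum fun h c => c * h) = f.sum fun l c => c * p ^ l := by
  rw [psi, Finsupp.sum_sum_index (h := fun h c => (c * h : ℕ))
    (fun _ => zero_mul _) (fun _ b c => add_mul b c _)]
  apply Finsupp.sum_congr
  intro l _
  rw [dgt, ← Finsupp.sum_finset_sum_index (h := fun h c => (c * h : ℕ))
    (fun _ => zero_mul _) (fun _ b c => add_mul b c _)]
  have hstep : ∀ k ∈ Finset.range (f l + 1),
      ((Finsupp.single (q ^ k * p ^ l) (f l / q ^ k % q) : ℕ →₀ ℕ).sum fun h c => c * h)
        = f l / q ^ k % q * q ^ k * p ^ l := by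
    intro k _
    rw [Finsupp.sum_single_index (h := fun h c => (c * h : ℕ)) (zero_mul _)]
    ring
  rw [Finset.sum_congr rfl hstep, ← Finset.sum_mul, digit_expand' hq]

lemma phi_psi (hp : 1 < p) (hq : 1 < q) (hpq : Nat.Coprime p q) (f : ℕ →₀ ℕ) :
    phi p q (psi p q f) = f := by
  have h0 : ∀ h : ℕ, Finsupp.single (eL p q h) ((0 : ℕ) * q ^ eK p q h) = 0 := by
    intro h; rw [zero_mul, Finsupp.single_zero]
  have hadd : ∀ (h : ℕ) (b c : ℕ),
      Finsupp.single (eL p q h) ((b + c) * q ^ eK p q h)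
        = Finsupp.single (eL p q h) (b * q ^ eK p q h)
          + Finsupp.single (eL p q h) (c * q ^ eK p q h) := by
    intro h b c; rw [add_mul, Finsupp.single_add]
  rw [psi, phi, Finsupp.sum_sum_index h0 hadd]
  conv_rhs => rw [← Finsupp.sum_single f]
  apply Finsupp.sum_congr
  intro l _
  rw [dgt, ← Finsupp.sum_finset_sum_index h0 hadd]
  have hstep : ∀ k ∈ Finset.range (f l + 1),
      ((Finsupp.single (q ^ k * p ^ l) (f l / q ^ k % q) : ℕ →₀ ℕ).sum fun h c =>
          Finsupp.single (eL p q h) (c * q ^ eK p q h))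
        = Finsupp.single l (f l / q ^ k % q * q ^ k) := by
    intro k _
    rw [Finsupp.sum_single_index (h0 _), (eK_eq hp hq hpq k l).1, (eK_eq hp hq hpq k l).2]
  rw [Finset.sum_congr rfl hstep, ← Finsupp.single_finset_sum, digit_expand' hq]

lemma phi_sum (hp : 1 < p) (hq : 1 < q) (hpq : Nat.Coprime p q) (a : ℕ →₀ ℕ)
    (ha : ∀ h, a h ≠ 0 → ∃ k l : ℕ, h = q ^ k * p ^ l) :
    ((phi p q a).sum fun l c => c * p ^ l) = a.sum fun h c => c * h := by
  rw [phi, Finsupp.sum_sum_index (h := fun l c => (c * p ^ l : ℕ))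
    (fun _ => zero_mul _) (fun _ b c => add_mul b c _)]
  apply Finsupp.sum_congr
  intro h hmem
  rw [Finsupp.sum_single_index (h := fun l c => (c * p ^ l : ℕ)) (zero_mul _), mul_assoc,
    ← eKL_spec h (ha h (Finsupp.mem_support_iff.mp hmem))]

lemma phi_apply (hp : 1 < p) (hq : 1 < q) (hpq : Nat.Coprime p q) (a : ℕ →₀ ℕ)
    (ha : ∀ h, a h ≠ 0 → ∃ k l : ℕ, h = q ^ k * p ^ l) (l : ℕ) :
    phi p q a l
      = ∑ k ∈ Finset.range (a.support.sup id + 1), a (q ^ k * p ^ l) * q ^ k := by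
  classical
  set M := a.support.sup id + 1 with hM
  rw [phi, Finsupp.sum_apply, Finsupp.sum]
  have hstep : ∀ h ∈ a.support,
      (Finsupp.single (eL p q h) (a h * q ^ eK p q h) : ℕ →₀ ℕ) l
        = if eL p q h = l then a h * q ^ eK p q h else 0 := by
    intro h _
    rw [Finsupp.single_apply]
  rw [Finset.sum_congr rfl hstep]
  set t : ℕ → ℕ := fun h => if eL p q h = l then a h * q ^ eK p q h else 0 with ht
  set T := (Finset.range M).image (fun k => q ^ k * p ^ l) with hT
  -- key: nonzero terms of supp a lie in T
  have hkey : ∀ h ∈ a.support, h ∉ T → t h = 0 := by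
    intro h hmem hnT
    by_contra hne
    have hL : eL p q h = l := by
      by_contra hL'
      exact hne (if_neg hL')
    have hane : a h ≠ 0 := Finsupp.mem_support_iff.mp hmem
    have hform := ha h hane
    have hspec := eKL_spec h hform
    have hle : h ≤ a.support.sup id := Finset.le_sup (f := id) hmem
    have hkM : eK p q h < M := by
      have h1 : eK p q h < q ^ eK p q h := Nat.lt_pow_self hq
      have h2 : q ^ eK p q h * p ^ eL p q h ≤ a.support.sup id := by
        rw [← hspec]; exact hle
      have h2' : q ^ eK p q h ≤ q ^ eK p q h * p ^ eL p q h :=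
        Nat.le_mul_of_pos_right _ (pow_pos (by omega) _)
      rw [hM]
      omega
    apply hnT
    rw [hT]
    apply Finset.mem_image.mpr
    exact ⟨eK p q h, Finset.mem_range.mpr hkM, by rw [← hL, ← hspec]⟩
  have h1 : ∑ h ∈ a.support, t h = ∑ h ∈ a.support ∪ T, t h := by
    apply Finset.sum_subset Finset.subset_union_left
    intro h _ hns
    rw [ht]
    simp only [Finsupp.notMem_support_iff.mp hns, zero_mul, ite_self]
  have h2 : ∑ h ∈ a.support ∪ T, t h = ∑ h ∈ T, t h := by
    symm
    apply Finset.sum_subset Finset.subset_union_right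
    intro h hmem hnT
    rcases Finset.mem_union.mp hmem with hs | hs
    · exact hkey h hs hnT
    · exact absurd hs hnT
  have h3 : ∑ h ∈ T, t h = ∑ k ∈ Finset.range M, t (q ^ k * p ^ l) := by
    rw [hT]
    apply Finset.sum_image
    intro k _ k' _ he
    exact (exp_unique hp hq hpq he).1
  rw [h1, h2, h3]
  apply Finset.sum_congr rfl
  intro k _
  have h4 : t (q ^ k * p ^ l)
      = if eL p q (q ^ k * p ^ l) = l
          then a (q ^ k * p ^ l) * q ^ eK p q (q ^ k * p ^ l) else 0 := rfl
  rw [h4, (eK_eq hp hq hpq k l).1, (eK_eq hp hq hpq k l).2, if_pos rfl]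

lemma psi_phi (hp : 1 < p) (hq : 1 < q) (hpq : Nat.Coprime p q) (a : ℕ →₀ ℕ)
    (ha : ∀ h, a h ≠ 0 → ∃ k l : ℕ, h = q ^ k * p ^ l) (hb : ∀ h, a h ≤ q - 1) :
    psi p q (phi p q a) = a := by
  ext h
  by_cases hform : ∃ k l : ℕ, h = q ^ k * p ^ l
  · obtain ⟨k, l, rfl⟩ := hform
    rw [psi_apply_form hp hq hpq, phi_apply hp hq hpq a ha]
    apply val_digit hq
    · intro k'
      have := hb (q ^ k' * p ^ l)
      omega
    · intro k' hk'
      by_contra hne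
      have hmem : q ^ k' * p ^ l ∈ a.support := Finsupp.mem_support_iff.mpr hne
      have hle : q ^ k' * p ^ l ≤ a.support.sup id := Finset.le_sup (f := id) hmem
      have h1 : k' < q ^ k' := Nat.lt_pow_self hq
      have h2 : q ^ k' ≤ q ^ k' * p ^ l := Nat.le_mul_of_pos_right _ (pow_pos (by omega) _)
      omega
  · push_neg at hform
    rw [psi_apply_nform _ _ hform]
    by_contra hne
    have : a h ≠ 0 := fun h0 => hne h0.symm
    obtain ⟨k, l, he⟩ := ha h this
    exact hform k l he

end DBRAux

theorem double_base_reps_eq_partitions_into_powers (p q n : ℕ)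
    (hp : 1 < p) (hq : 1 < q) (hpq : Nat.Coprime p q) (hn : 0 < n) :
    ({a : ℕ →₀ ℕ | (∀ h, a h ≠ 0 → ∃ k l : ℕ, h = q ^ k * p ^ l) ∧
        (∀ h, a h ≤ q - 1) ∧ (a.sum fun h c => c * h) = n}).ncard =
      ({f : ℕ →₀ ℕ | (f.sum fun l c => c * p ^ l) = n}).ncard := by
  classical
  set A : Set (ℕ →₀ ℕ) := {a : ℕ →₀ ℕ | (∀ h, a h ≠ 0 → ∃ k l : ℕ, h = q ^ k * p ^ l) ∧
      (∀ h, a h ≤ q - 1) ∧ (a.sum fun h c => c * h) = n} with hA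
  set B : Set (ℕ →₀ ℕ) := {f : ℕ →₀ ℕ | (f.sum fun l c => c * p ^ l) = n} with hB
  have hmapsto : Set.MapsTo (DBRAux.psi p q) B A := by
    intro f hf
    refine ⟨?_, ?_, ?_⟩
    · intro h hne
      by_contra hform
      push_neg at hform
      exact hne (DBRAux.psi_apply_nform f h hform)
    · intro h
      by_cases hform : ∃ k l : ℕ, h = q ^ k * p ^ l
      · obtain ⟨k, l, rfl⟩ := hform
        rw [DBRAux.psi_apply_form hp hq hpq]
        have := Nat.mod_lt (f l / q ^ k) (show 0 < q by omega)
        omega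
      · push_neg at hform
        rw [DBRAux.psi_apply_nform f h hform]
        omega
    · rw [DBRAux.psi_sum hp hq hpq]
      exact hf
  have hinj : Set.InjOn (DBRAux.psi p q) B := by
    intro f hf g hg he
    rw [← DBRAux.phi_psi hp hq hpq f, he, DBRAux.phi_psi hp hq hpq g]
  have hsurj : Set.SurjOn (DBRAux.psi p q) B A := by
    intro a ha
    obtain ⟨ha1, ha2, ha3⟩ := ha
    refine ⟨DBRAux.phi p q a, ?_, DBRAux.psi_phi hp hq hpq a ha1 ha2⟩
    show (DBRAux.phi p q a).sum (fun l c => c * p ^ l) = n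
    rw [DBRAux.phi_sum hp hq hpq a ha1]
    exact ha3
  have himg : DBRAux.psi p q '' B = A := Set.Subset.antisymm hmapsto.image_subset hsurj
  rw [← himg, Set.ncard_image_of_injOn hinj]

end
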